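/- Let a < b, α ∈ (-∞,0) ∪ (1,∞), λ < 0, δ ∈ ℝ, and T(x) = λx + δ. Then for all x ∈ [a,b], f^{T(b),T(a)}_α(T(x)) = 1 - f^{a,b}_{1-α}(x), where f^{u,v}_γ(y) = γ(y-u)/(y+(γ-1)v-γu). -/

import Mathlib

theorem stmt_9 (a b α lam δ : ℝ) (hab : a < b) (hα : α < 0 ∨ 1 < α)
    (hlam : lam < 0)
    (f : ℝ → ℝ → ℝ → ℝ → ℝ)
    (hf : ∀ γ u v y, f γ u v y = γ * (y - u) / (y + (γ - 1) * v - γ * u))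
    (T : ℝ → ℝ) (hT : ∀ x, T x = lam * x + δ) :
    ∀ x ∈ Set.Icc a b, f α (T b) (T a) (T x) = 1 - f (1 - α) a b x := by
  intro x hx
  obtain ⟨hxa, hxb⟩ := hx
  have hD : x + (α - 1) * a - α * b ≠ 0 := by
    rcases hα with h | h
    · nlinarith
    · nlinarith
  have hlam' : lam ≠ 0 := ne_of_lt hlam
  have hD2 : T x + (α - 1) * T a - α * T b = lam * (x + (α - 1) * a - α * b) := by
    simp [hT]; ring
  have hD2' : T x + (α - 1) * T a - α * T b ≠ 0 := by
    rw [hD2]; exact mul_ne_zero hlam' hD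
  have hD3 : x + (1 - α - 1) * b - (1 - α) * a ≠ 0 := by
    intro h; apply hD; linarith [h]
  rw [hf, hf, hD2]
  have hnum : α * (T x - T b) = lam * (α * (x - b)) := by simp [hT]; ring
  rw [hnum, mul_div_mul_left _ _ hlam']
  have hDe : x + (1 - α - 1) * b - (1 - α) * a = x + (α - 1) * a - α * b := by ring
  rw [hDe, eq_sub_iff_add_eq, ← add_div, div_eq_one_iff_eq hD]
  ring
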